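/- For a definite determinantal representation, the hyperbolicity cone equals the spectrahedron: if A₁,…,Aₙ are real symmetric m×m matrices with A(e) ≻ 0 and h = det(∑xᵢAᵢ), then Λ(h,e) = {v ∈ ℝⁿ : ∑vᵢAᵢ ⪰ 0}. -/

import Mathlib

open MvPolynomial Polynomial Matrix

noncomputable def univPoly {n : ℕ} (h : MvPolynomial (Fin n) ℝ) (e v : Fin n → ℝ) : Polynomial ℝ :=
  MvPolynomial.aeval (fun i => Polynomial.C (v i) + Polynomial.C (e i) * Polynomial.X) h

def RealRooted (p : Polynomial ℝ) : Prop :=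
  ∀ z : ℂ, (p.map (algebraMap ℝ ℂ)).IsRoot z → z.im = 0

def Hyperbolic {n : ℕ} (h : MvPolynomial (Fin n) ℝ) (e : Fin n → ℝ) : Prop :=
  MvPolynomial.eval e h ≠ 0 ∧ ∀ v : Fin n → ℝ, RealRooted (univPoly h e v)

def hypCone {n : ℕ} (h : MvPolynomial (Fin n) ℝ) (e : Fin n → ℝ) : Set (Fin n → ℝ) :=
  {v | ∀ t : ℝ, (univPoly h e v).IsRoot t → t ≤ 0}

noncomputable def matPoly {n m : ℕ} (A : Fin n → Matrix (Fin m) (Fin m) ℝ) :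
    Matrix (Fin m) (Fin m) (MvPolynomial (Fin n) ℝ) :=
  fun j k => ∑ i, MvPolynomial.C (A i j k) * MvPolynomial.X i

lemma eval_univPoly {n m : ℕ} (A : Fin n → Matrix (Fin m) (Fin m) ℝ) (e v : Fin n → ℝ) (t : ℝ) :
    (univPoly (matPoly A).det e v).eval t
      = ((∑ i, v i • A i) + t • ∑ i, e i • A i).det := by
  have hcomp : (Polynomial.evalRingHom t).comp
      ((MvPolynomial.aeval (fun i => Polynomial.C (v i) + Polynomial.C (e i) * Polynomial.X) :
        MvPolynomial (Fin n) ℝ →ₐ[ℝ] Polynomial ℝ) : MvPolynomial (Fin n) ℝ →+* Polynomial ℝ)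
      = MvPolynomial.eval (fun i => v i + e i * t) := by
    apply MvPolynomial.ringHom_ext <;> intro x <;> simp
  have h1 : (univPoly (matPoly A).det e v).eval t
      = MvPolynomial.eval (fun i => v i + e i * t) (matPoly A).det :=
    DFunLike.congr_fun hcomp (matPoly A).det
  rw [h1, RingHom.map_det]
  congr 1
  ext j k
  simp only [matPoly, RingHom.mapMatrix_apply, Matrix.map_apply, map_sum, _root_.map_mul,
    MvPolynomial.eval_C, MvPolynomial.eval_X, Matrix.add_apply, Matrix.smul_apply,
    Matrix.sum_apply, smul_eq_mul]
  rw [Finset.mul_sum, ← Finset.sum_add_distrib]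
  exact Finset.sum_congr rfl fun i _ => by ring

lemma isHermitian_sum {n m : ℕ} (A : Fin n → Matrix (Fin m) (Fin m) ℝ)
    (hsymm : ∀ i, (A i).IsSymm) (v : Fin n → ℝ) : (∑ i, v i • A i).IsHermitian := by
  show _ = _
  rw [Matrix.conjTranspose_eq_transpose_of_trivial, Matrix.transpose_sum]
  exact Finset.sum_congr rfl fun i _ => by rw [Matrix.transpose_smul, (hsymm i)]

lemma posDef_smul {m : ℕ} {N : Matrix (Fin m) (Fin m) ℝ} (hN : N.PosDef) {t : ℝ} (ht : 0 < t) :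
    (t • N).PosDef := by
  refine ⟨?_, fun x hx => ?_⟩
  · show _ = _
    rw [Matrix.conjTranspose_smul, star_trivial, hN.1.eq]
  · exact (hN.smul ht).2 hx

theorem stmt19 {n m : ℕ} (A : Fin n → Matrix (Fin m) (Fin m) ℝ)
    (hsymm : ∀ i, (A i).IsSymm) (e : Fin n → ℝ)
    (hpd : (∑ i, e i • A i).PosDef) :
    hypCone (matPoly A).det e = {v : Fin n → ℝ | (∑ i, v i • A i).PosSemidef} := by
  set N : Matrix (Fin m) (Fin m) ℝ := ∑ i, e i • A i with hNdef
  ext v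
  set M : Matrix (Fin m) (Fin m) ℝ := ∑ i, v i • A i with hMdef
  have key : ∀ t : ℝ, (univPoly (matPoly A).det e v).IsRoot t ↔ (M + t • N).det = 0 := by
    intro t
    rw [Polynomial.IsRoot, eval_univPoly]
  constructor
  · -- hypCone → PSD
    intro hv
    simp only [Set.mem_setOf_eq]
    -- square root of N
    set S := (open MatrixOrder in CFC.sqrt N) with hSdef
    have hS : S.PosSemidef := by open MatrixOrder in exact (CFC.sqrt_nonneg N).posSemidef
    have hSS : S * S = N := by
      open MatrixOrder in exact CFC.sqrt_mul_sqrt_self N hpd.posSemidef.nonneg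
    have hdS : S.det ≠ 0 := by
      intro h
      have : N.det = 0 := by rw [← hSS, Matrix.det_mul, h, mul_zero]
      exact hpd.det_pos.ne' this
    have hU : IsUnit S.det := isUnit_iff_ne_zero.mpr hdS
    have hSinv : S * S⁻¹ = 1 := Matrix.mul_nonsing_inv S hU
    have hinvS : S⁻¹ * S = 1 := Matrix.nonsing_inv_mul S hU
    have hMh : M.IsHermitian := isHermitian_sum A hsymm v
    set B : Matrix (Fin m) (Fin m) ℝ := S⁻¹ * M * S⁻¹ with hBdef
    have hSinvH : (S⁻¹).IsHermitian := hS.1.inv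
    have hBh : B.IsHermitian := by
      have := Matrix.isHermitian_conjTranspose_mul_mul S⁻¹ hMh
      rwa [hSinvH.eq] at this
    have hMeq : S * B * S = M := by
      rw [hBdef]
      calc S * (S⁻¹ * M * S⁻¹) * S = (S * S⁻¹) * M * (S⁻¹ * S) := by
            simp only [Matrix.mul_assoc]
        _ = M := by rw [hSinv, hinvS, Matrix.one_mul, Matrix.mul_one]
    -- all eigenvalues of B are nonneg
    have heig : ∀ i, 0 ≤ hBh.eigenvalues i := by
      intro i
      by_contra hlt
      push_neg at hlt
      set μ := hBh.eigenvalues i with hμ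
      set t := -μ with ht
      have htpos : 0 < t := by simp [ht]; linarith
      have hroot : (M + t • N).det = 0 := by
        have hfac : M + t • N = S * (B + t • 1) * S := by
          rw [Matrix.mul_add, Matrix.add_mul, hMeq]
          congr 1
          rw [Matrix.mul_smul, Matrix.smul_mul, Matrix.mul_one, hSS]
        rw [hfac, Matrix.det_mul, Matrix.det_mul]
        have hdetB : (B + t • 1).det = 0 := by
          rw [← Matrix.exists_mulVec_eq_zero_iff]
          refine ⟨⇑(hBh.eigenvectorBasis i), ?_, ?_⟩
          · intro h
            apply hBh.eigenvectorBasis.orthonormal.ne_zero i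
            ext j
            exact congrFun h j
          · rw [Matrix.add_mulVec, hBh.mulVec_eigenvectorBasis, Matrix.smul_mulVec,
              Matrix.one_mulVec]
            ext j
            simp [ht, hμ]
        rw [hdetB, mul_zero, zero_mul]
      have := hv t ((key t).mpr hroot)
      linarith
    have hBpsd : B.PosSemidef := hBh.posSemidef_iff_eigenvalues_nonneg.mpr heig
    have := hBpsd.mul_mul_conjTranspose_same S
    rwa [hS.1.eq, hMeq] at this
  · -- PSD → hypCone
    intro hpsd t hroot
    simp only [Set.mem_setOf_eq] at hpsd
    by_contra hgt
    push_neg at hgt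
    have hPD : (M + t • N).PosDef := Matrix.PosDef.posSemidef_add hpsd (posDef_smul hpd hgt)
    exact hPD.det_pos.ne' ((key t).mp hroot)
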